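/- Let F be a finite field with |F| = q, and let m, n, s, t be positive integers with t ≤ s. If q^{s·n + m·t} · s^{m·t} < q^{n·m}, then there exists a matrix M ∈ F^{m×n} that admits no (s, t) linear data structure. -/

import Mathlib

/-- A matrix is `t`-row-sparse if every row has at most `t` nonzero entries. -/
def RowSparse {F : Type*} [Field F] {m k : ℕ} (t : ℕ) (Q : Matrix (Fin m) (Fin k) F) : Prop :=
  ∀ i, {j | Q i j ≠ 0}.ncard ≤ t

/-- An `(s,t)` linear data structure for `M` is a factorization `M = Q * P` with `Q`
a `t`-row-sparse `m × s` matrix and `P` an `s × n` matrix. -/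
def HasLDS {F : Type*} [Field F] {m n : ℕ} (s t : ℕ) (M : Matrix (Fin m) (Fin n) F) : Prop :=
  ∃ (Q : Matrix (Fin m) (Fin s) F) (P : Matrix (Fin s) (Fin n) F),
    RowSparse t Q ∧ M = Q * P

lemma row_repr {F : Type*} [Field F] {s t : ℕ} (hts : t ≤ s) (r : Fin s → F)
    (hr : {j | r j ≠ 0}.ncard ≤ t) :
    ∃ (σ : Fin t → Fin s) (v : Fin t → F),
      ∀ j, r j = ∑ k, if σ k = j then v k else 0 := by
  classical
  have hfin : {j | r j ≠ 0}.Finite := Set.toFinite _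
  set S : Finset (Fin s) := hfin.toFinset with hS
  have hScard : S.card ≤ t := by
    rw [← Set.ncard_eq_toFinset_card _ hfin] at *; exact hr
  obtain ⟨T, hST, hT⟩ := Finset.exists_superset_card_eq hScard (by simpa using hts)
  set e := T.equivFinOfCardEq hT
  refine ⟨fun k => (e.symm k : Fin s), fun k => r (e.symm k : Fin s), fun j => ?_⟩
  by_cases hj : j ∈ T
  · have hk0 : (e.symm (e ⟨j, hj⟩) : Fin s) = j := by simp
    rw [Finset.sum_eq_single (e ⟨j, hj⟩)]
    · simp [hk0]
    · intro k _ hk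
      rw [if_neg]
      intro hkj
      apply hk
      have : (e.symm k : T) = ⟨j, hj⟩ := Subtype.ext hkj
      rw [← e.apply_symm_apply k, this]
    · simp
  · have hrj : r j = 0 := by
      by_contra hne
      exact hj (hST (by simp [hS, hne]))
    rw [hrj, Finset.sum_eq_zero]
    intro k _
    rw [if_neg]
    intro hkj
    exact hj (hkj ▸ (e.symm k).2)

/-- counting lower bound: over a finite field of size `q`, if
`q^{s·n + m·t} · s^{m·t} < q^{n·m}`, then some `M ∈ F^{m×n}` admits no `(s,t)` linear
data structure. -/
theorem exists_matrix_without_lds {F : Type*} [Field F] [Fintype F]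
    (m n s t : ℕ) (hm : 0 < m) (hn : 0 < n) (ht : 0 < t) (hts : t ≤ s)
    (h : Fintype.card F ^ (s * n + m * t) * s ^ (m * t) < Fintype.card F ^ (n * m)) :
    ∃ M : Matrix (Fin m) (Fin n) F, ¬ HasLDS s t M := by
  classical
  by_contra hc
  push_neg at hc
  set q := Fintype.card F with hq
  let f : ((Fin m → (Fin t → Fin s) × (Fin t → F)) × Matrix (Fin s) (Fin n) F) →
      Matrix (Fin m) (Fin n) F :=
    fun gP => (Matrix.of fun i j => ∑ k, if (gP.1 i).1 k = j then (gP.1 i).2 k else 0) * gP.2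
  have hsurj : Function.Surjective f := by
    intro M
    obtain ⟨Q, P, hQ, hM⟩ := hc M
    have hrow : ∀ i, ∃ (σ : Fin t → Fin s) (v : Fin t → F),
        ∀ j, Q i j = ∑ k, if σ k = j then v k else 0 :=
      fun i => row_repr hts (Q i) (hQ i)
    choose σ v hσv using hrow
    refine ⟨⟨fun i => (σ i, v i), P⟩, ?_⟩
    have hQeq : (Matrix.of fun i j => ∑ k, if σ i k = j then v i k else 0) = Q := by
      ext i j
      exact (hσv i j).symm
    simp only [f, hQeq]
    exact hM.symm
  have hcard := Fintype.card_le_of_surjective f hsurj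
  have hdom : Fintype.card ((Fin m → (Fin t → Fin s) × (Fin t → F)) ×
      Matrix (Fin s) (Fin n) F) = (s ^ t * q ^ t) ^ m * q ^ (n * s) := by
    have : Fintype.card (Matrix (Fin s) (Fin n) F) = q ^ (n * s) := by
      show Fintype.card (Fin s → Fin n → F) = _
      simp [Fintype.card_fun, pow_mul, hq]
    simp [Fintype.card_prod, Fintype.card_fun, this, hq]
  have hcod : Fintype.card (Matrix (Fin m) (Fin n) F) = q ^ (n * m) := by
    show Fintype.card (Fin m → Fin n → F) = _
    simp [Fintype.card_fun, pow_mul, hq]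
  rw [hcod, hdom] at hcard
  have heq : (s ^ t * q ^ t) ^ m * q ^ (n * s) = q ^ (s * n + m * t) * s ^ (m * t) := by
    rw [mul_pow, ← pow_mul, ← pow_mul, pow_add]
    rw [mul_comm t m, mul_comm s n]
    ring
  rw [heq] at hcard
  exact absurd h (not_lt.mpr hcard)
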